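/- In the Savage setting with pure risk, if a preference relation ≿ on 𝒳 satisfies Axioms (M), (RC), (SRM), and (C), then there exists a statistic γ such that for all X, Y ∈ 𝒳(G): X ≿ Y ⇔ γ(X_#P) ≥ γ(Y_#P), where X_#P denotes the pushforward of P under X (which is a distribution since X is bounded). -/

import Mathlib

open MeasureTheory Filter Topology

noncomputable section

/-- Bounded measurable real-valued functions with respect to the σ-algebra `m`. -/
def BddMeas {Ω : Type*} (m : MeasurableSpace Ω) (X : Ω → ℝ) : Prop :=
  @Measurable Ω ℝ m _ X ∧ ∃ M : ℝ, ∀ ω, |X ω| ≤ M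

/-- A capacity on a measurable space. -/
def IsCapacity {Ω : Type*} (m : MeasurableSpace Ω) (ν : Set Ω → ℝ) : Prop :=
  ν ∅ = 0 ∧ ν Set.univ = 1 ∧
    ∀ A B : Set Ω, @MeasurableSet Ω m A → @MeasurableSet Ω m B → A ⊆ B → ν A ≤ ν B

/-- A continuous capacity: continuous along increasing and decreasing sequences. -/
def IsContinuousCapacity {Ω : Type*} (m : MeasurableSpace Ω) (ν : Set Ω → ℝ) : Prop :=
  IsCapacity m ν ∧
    (∀ A : ℕ → Set Ω, (∀ n, @MeasurableSet Ω m (A n)) → Monotone A →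
      Filter.Tendsto (fun n => ν (A n)) Filter.atTop (nhds (ν (⋃ n, A n)))) ∧
    (∀ A : ℕ → Set Ω, (∀ n, @MeasurableSet Ω m (A n)) → Antitone A →
      Filter.Tendsto (fun n => ν (A n)) Filter.atTop (nhds (ν (⋂ n, A n))))

/-- Supermodularity of a capacity. -/
def Supermodular {Ω : Type*} (m : MeasurableSpace Ω) (ν : Set Ω → ℝ) : Prop :=
  ∀ A B : Set Ω, @MeasurableSet Ω m A → @MeasurableSet Ω m B →
    ν A + ν B ≤ ν (A ∪ B) + ν (A ∩ B)

/-- A distribution: a compactly supported Borel probability measure on ℝ. -/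
def IsDistribution (Q : Measure ℝ) : Prop :=
  IsProbabilityMeasure Q ∧ ∃ a b : ℝ, Q (Set.Icc a b) = 1

/-- `FSDle P Q` means `Q ≥_fsd P` (first-order stochastic dominance). -/
def FSDle (P Q : Measure ℝ) : Prop := ∀ x : ℝ, P (Set.Ioi x) ≤ Q (Set.Ioi x)

/-- Weak convergence of a sequence of Borel measures on ℝ. -/
def WeakConv (Qn : ℕ → Measure ℝ) (Q : Measure ℝ) : Prop :=
  ∀ f : BoundedContinuousFunction ℝ ℝ,
    Filter.Tendsto (fun n => ∫ x, f x ∂(Qn n)) Filter.atTop (nhds (∫ x, f x ∂Q))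

/-- A statistic: strictly fsd-monotone and compactly continuous functional on distributions. -/
def IsStatistic (γ : Measure ℝ → ℝ) : Prop :=
  (∀ Q P : Measure ℝ, IsDistribution Q → IsDistribution P → FSDle P Q → γ P ≤ γ Q) ∧
  (∀ Q P : Measure ℝ, IsDistribution Q → IsDistribution P → FSDle P Q → Q ≠ P → γ P < γ Q) ∧
  (∀ (Qn : ℕ → Measure ℝ) (Q : Measure ℝ), (∀ n, IsDistribution (Qn n)) → IsDistribution Q →
    (∃ a b : ℝ, ∀ n, Qn n (Set.Icc a b) = 1) → WeakConv Qn Q →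
    Filter.Tendsto (fun n => γ (Qn n)) Filter.atTop (nhds (γ Q)))

/-- A certainty-equivalent statistic. -/
def IsCEStatistic (γ : Measure ℝ → ℝ) : Prop :=
  IsStatistic γ ∧ ∀ c : ℝ, γ (MeasureTheory.Measure.dirac c) = c

/-- `D` is the Choquet act-to-distribution mapping associated with the capacity `ν`. -/
def IsChoquetATD {Ω : Type*} (m : MeasurableSpace Ω) (ν : Set Ω → ℝ)
    (D : (Ω → ℝ) → Measure ℝ) : Prop :=
  ∀ X : Ω → ℝ, BddMeas m X →
    IsDistribution (D X) ∧ ∀ x : ℝ, (D X (Set.Ioi x)).toReal = ν {ω | x < X ω}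

/-- The ν-quantile of `X` at level `α`. -/
def capQuantile {Ω : Type*} (ν : Set Ω → ℝ) (X : Ω → ℝ) (α : ℝ) : ℝ :=
  sInf {x : ℝ | ν {ω | x < X ω} < 1 - α}

/-- The quantile function of a distribution. -/
def distQuantile (Q : Measure ℝ) (α : ℝ) : ℝ :=
  sInf {x : ℝ | (Q (Set.Ioi x)).toReal < 1 - α}

/-- Comonotonic pairs of functions. -/
def Comonotonic {Ω : Type*} (X Y : Ω → ℝ) : Prop :=
  ∀ s s' : Ω, 0 ≤ (X s - X s') * (Y s - Y s')

/-- Real-valued indicator function of a set. -/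
def ind {Ω : Type*} (A : Set Ω) : Ω → ℝ := A.indicator fun _ => 1

/-- Atomlessness of `P` in the sense of the paper. -/
def AtomlessOn {Ω : Type*} (G : MeasurableSpace Ω) (P : @Measure Ω G) : Prop :=
  ∀ A : Set Ω, @MeasurableSet Ω G A → ∀ r : ENNReal, r ≤ P A →
    ∃ B : Set Ω, @MeasurableSet Ω G B ∧ B ⊆ A ∧ P B = r

/-- A capacity is risk conforming if it coincides with `P` on `G`. -/
def RiskConforming {Ω : Type*} (G : MeasurableSpace Ω) (P : @Measure Ω G)
    (ν : Set Ω → ℝ) : Prop :=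
  ∀ A : Set Ω, @MeasurableSet Ω G A → ν A = (P A).toReal

/-- A preference relation: a total preorder on the bounded `m`-measurable functions. -/
def TotalPreorderOn {Ω : Type*} (m : MeasurableSpace Ω)
    (pref : (Ω → ℝ) → (Ω → ℝ) → Prop) : Prop :=
  (∀ X Y, BddMeas m X → BddMeas m Y → pref X Y ∨ pref Y X) ∧
  (∀ X Y Z, BddMeas m X → BddMeas m Y → BddMeas m Z → pref X Y → pref Y Z → pref X Z)

/-- Axiom (M): monotonicity. -/
def AxiomM {Ω : Type*} (m : MeasurableSpace Ω) (pref : (Ω → ℝ) → (Ω → ℝ) → Prop) : Prop :=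
  ∀ X Y, BddMeas m X → BddMeas m Y → (∀ ω, Y ω ≤ X ω) → pref X Y

/-- Axiom (RC): risk conformity. -/
def AxiomRC {Ω : Type*} (G : MeasurableSpace Ω) (P : @Measure Ω G)
    (pref : (Ω → ℝ) → (Ω → ℝ) → Prop) : Prop :=
  ∀ X Y, BddMeas G X → BddMeas G Y →
    (∀ x : ℝ, P {ω | x < X ω} = P {ω | x < Y ω}) → pref X Y ∧ pref Y X

/-- Axiom (SRM): strict risk monotonicity. -/
def AxiomSRM {Ω : Type*} (G : MeasurableSpace Ω) (P : @Measure Ω G)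
    (pref : (Ω → ℝ) → (Ω → ℝ) → Prop) : Prop :=
  ∀ X Y, BddMeas G X → BddMeas G Y →
    P {ω | Y ω ≤ X ω} = 1 → 0 < P {ω | Y ω < X ω} → pref X Y ∧ ¬ pref Y X

/-- Axiom (C): continuity (B-closedness of upper and lower contour sets). -/
def AxiomC {Ω : Type*} (m : MeasurableSpace Ω) (pref : (Ω → ℝ) → (Ω → ℝ) → Prop) : Prop :=
  ∀ X, BddMeas m X → ∀ (Yn : ℕ → Ω → ℝ) (Y : Ω → ℝ),
    (∀ n, BddMeas m (Yn n)) → BddMeas m Y →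
    (∃ M : ℝ, ∀ n ω, |Yn n ω| ≤ M) →
    (∀ ω, Filter.Tendsto (fun n => Yn n ω) Filter.atTop (nhds (Y ω))) →
    ((∀ n, pref X (Yn n)) → pref X Y) ∧ ((∀ n, pref (Yn n) X) → pref Y X)

/-- Axiom (CD): cumulative dominance. -/
def AxiomCD {Ω : Type*} (m : MeasurableSpace Ω) (pref : (Ω → ℝ) → (Ω → ℝ) → Prop) : Prop :=
  ∀ X Y, BddMeas m X → BddMeas m Y →
    (∀ x : ℝ, pref (ind {ω | x < X ω}) (ind {ω | x < Y ω}) ∧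
       pref (ind {ω | x < Y ω}) (ind {ω | x < X ω})) →
    pref X Y ∧ pref Y X

/-- `SSDle P Q` means `Q ≥_ssd P` (second-order stochastic dominance). -/
def SSDle (P Q : Measure ℝ) : Prop :=
  ∀ f : ℝ → ℝ, Monotone f → ConcaveOn ℝ Set.univ f → ∫ x, f x ∂P ≤ ∫ x, f x ∂Q

/-- Comonotonic quasiconcavity of a statistic. -/
def ComonotonicQuasiconcave (γ : Measure ℝ → ℝ) : Prop :=
  ∀ Q P R : Measure ℝ, IsDistribution Q → IsDistribution P → IsDistribution R →
    ∀ l : ℝ, 0 ≤ l → l ≤ 1 →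
    (∀ β : ℝ, 0 < β → β < 1 →
      distQuantile R β = l * distQuantile Q β + (1 - l) * distQuantile P β) →
    min (γ Q) (γ P) ≤ γ R

/-- Exactness of a capacity. -/
def ExactCapacity {Ω : Type*} (m : MeasurableSpace Ω) (ν : Set Ω → ℝ) : Prop :=
  ∀ A : Set Ω, @MeasurableSet Ω m A →
    ∃ μ : @Measure Ω m, @IsProbabilityMeasure Ω m μ ∧
      (∀ B : Set Ω, @MeasurableSet Ω m B → ν B ≤ (μ B).toReal) ∧ (μ A).toReal = ν A


namespace Stmt8Aux

open scoped Classical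


/-- the set whose infimum is the (upper) quantile -/
def qset (Q : Measure ℝ) (α : ℝ) : Set ℝ :=
  {x | (Q (Set.Ioi x)).toReal < 1 - α ∨ Q (Set.Ioi x) = 0}

def sQ (Q : Measure ℝ) (α : ℝ) : ℝ := sInf (qset Q α)

/-- clamped quantile function -/
def cQ (Q : Measure ℝ) (α : ℝ) : ℝ := sQ Q (max 0 (min 1 α))

section basic

variable {Q : Measure ℝ} {a b : ℝ} (hQ : IsProbabilityMeasure Q) (hab : Q (Set.Icc a b) = 1)

include hQ hab

lemma ioi_b_zero : Q (Set.Ioi b) = 0 := by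
  have h1 : Q (Set.Icc a b)ᶜ = 0 := by
    rw [measure_compl measurableSet_Icc (measure_ne_top Q _), hab, measure_univ, tsub_self]
  have h2 : Set.Ioi b ⊆ (Set.Icc a b)ᶜ := by
    intro x hx hx2
    exact absurd hx2.2 (not_le.mpr hx)
  exact le_antisymm (h1 ▸ measure_mono h2) (zero_le)

lemma ioi_lt_a_one {x : ℝ} (hx : x < a) : Q (Set.Ioi x) = 1 := by
  have h2 : Set.Icc a b ⊆ Set.Ioi x := fun y hy => lt_of_lt_of_le hx hy.1
  refine le_antisymm prob_le_one ?_
  calc (1:ENNReal) = Q (Set.Icc a b) := hab.symm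
    _ ≤ Q (Set.Ioi x) := measure_mono h2

lemma b_mem_qset (α : ℝ) : b ∈ qset Q α := Or.inr (ioi_b_zero hQ hab)

lemma qset_nonempty (α : ℝ) : (qset Q α).Nonempty := ⟨b, b_mem_qset hQ hab α⟩

lemma qset_subset_Ici {α : ℝ} (hα : 0 ≤ α) : qset Q α ⊆ Set.Ici a := by
  intro x hx
  by_contra hxa
  rw [Set.mem_Ici, not_le] at hxa
  have h1 : Q (Set.Ioi x) = 1 := ioi_lt_a_one hQ hab hxa
  rcases hx with hx | hx
  · rw [h1] at hx
    simp only [ENNReal.toReal_one] at hx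
    linarith
  · rw [h1] at hx; exact one_ne_zero hx

lemma qset_bddBelow {α : ℝ} (hα : 0 ≤ α) : BddBelow (qset Q α) :=
  ⟨a, fun x hx => qset_subset_Ici hQ hab hα hx⟩

lemma a_le_sQ {α : ℝ} (hα : 0 ≤ α) : a ≤ sQ Q α :=
  le_csInf (qset_nonempty hQ hab α) (fun x hx => qset_subset_Ici hQ hab hα hx)

lemma sQ_le_mem {α x : ℝ} (hα : 0 ≤ α) (hx : x ∈ qset Q α) : sQ Q α ≤ x :=
  csInf_le (qset_bddBelow hQ hab hα) hx

lemma sQ_le_b {α : ℝ} (hα : 0 ≤ α) : sQ Q α ≤ b :=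
  sQ_le_mem hQ hab hα (b_mem_qset hQ hab α)

end basic

lemma qset_anti {Q : Measure ℝ} {α β : ℝ} (h : α ≤ β) : qset Q β ⊆ qset Q α := by
  intro x hx
  rcases hx with hx | hx
  · exact Or.inl (lt_of_lt_of_le hx (by linarith))
  · exact Or.inr hx

lemma sQ_mono {Q : Measure ℝ} {a b : ℝ} (hQ : IsProbabilityMeasure Q)
    (hab : Q (Set.Icc a b) = 1) {α β : ℝ} (hα : 0 ≤ α) (h : α ≤ β) : sQ Q α ≤ sQ Q β :=
  csInf_le_csInf (qset_bddBelow hQ hab hα) (qset_nonempty hQ hab β) (qset_anti h)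

/-- right-continuity: strict survival inequality pushes the quantile strictly above x -/
lemma lt_sQ {Q : Measure ℝ} {a b : ℝ} (hQ : IsProbabilityMeasure Q)
    (hab : Q (Set.Icc a b) = 1) {α x : ℝ} (hα : α ≤ 1)
    (hx : 1 - α < (Q (Set.Ioi x)).toReal) : x < sQ Q α := by
  have hfin : Q (Set.Ioi x) ≠ ⊤ := measure_ne_top Q _
  have hsup : Q (Set.Ioi x) = ⨆ n : ℕ, Q (Set.Ioi (x + 1 / (n + 1))) := by
    have hU : Set.Ioi x = ⋃ n : ℕ, Set.Ioi (x + 1 / ((n : ℝ) + 1)) := by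
      ext y
      simp only [Set.mem_Ioi, Set.mem_iUnion]
      constructor
      · intro hy
        obtain ⟨n, hn⟩ := exists_nat_one_div_lt (sub_pos.mpr hy)
        exact ⟨n, by linarith⟩
      · rintro ⟨n, hn⟩
        have : 0 < 1 / ((n : ℝ) + 1) := by positivity
        linarith
    rw [hU]
    refine Directed.measure_iUnion ?_
    intro m n
    rcases le_total m n with h | h
    · refine ⟨n, ?_, subset_rfl⟩
      apply Set.Ioi_subset_Ioi
      have hc : (m:ℝ) ≤ (n:ℝ) := Nat.cast_le.mpr h
      have h1 : (1:ℝ) / (n + 1) ≤ 1 / (m + 1) := by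
        apply one_div_le_one_div_of_le (by positivity)
        linarith
      linarith
    · refine ⟨m, subset_rfl, ?_⟩
      apply Set.Ioi_subset_Ioi
      have hc : (n:ℝ) ≤ (m:ℝ) := Nat.cast_le.mpr h
      have h1 : (1:ℝ) / (m + 1) ≤ 1 / (n + 1) := by
        apply one_div_le_one_div_of_le (by positivity)
        linarith
      linarith
  have h1 : ENNReal.ofReal (1 - α) < Q (Set.Ioi x) := by
    rw [ENNReal.ofReal_lt_iff_lt_toReal (by linarith) hfin]
    exact hx
  rw [hsup] at h1
  obtain ⟨n, hn⟩ := lt_iSup_iff.mp h1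
  have hδ : (0:ℝ) < 1 / ((n:ℝ) + 1) := by positivity
  have hn' : 1 - α < (Q (Set.Ioi (x + 1 / ((n:ℝ) + 1)))).toReal := by
    rw [← ENNReal.ofReal_lt_iff_lt_toReal (by linarith) (measure_ne_top Q _)]
    exact hn
  have key : ∀ y ∈ qset Q α, x + 1 / ((n:ℝ) + 1) ≤ y := by
    intro y hy
    by_contra hc
    push_neg at hc
    have hmono : Q (Set.Ioi (x + 1 / ((n:ℝ) + 1))) ≤ Q (Set.Ioi y) :=
      measure_mono (Set.Ioi_subset_Ioi hc.le)
    have hmono' : (Q (Set.Ioi (x + 1 / ((n:ℝ) + 1)))).toReal ≤ (Q (Set.Ioi y)).toReal :=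
      ENNReal.toReal_mono (measure_ne_top Q _) hmono
    rcases hy with hy | hy
    · linarith
    · rw [hy] at hmono'
      simp only [ENNReal.toReal_zero] at hmono'
      linarith
  have : x + 1 / ((n:ℝ) + 1) ≤ sQ Q α := le_csInf (qset_nonempty hQ hab α) key
  linarith


lemma sQ_fsd {Pm Q : Measure ℝ} (hP : IsProbabilityMeasure Pm) (hQ : IsProbabilityMeasure Q)
    {aP bP aQ bQ : ℝ} (habP : Pm (Set.Icc aP bP) = 1) (habQ : Q (Set.Icc aQ bQ) = 1)
    (hfsd : FSDle Pm Q) {α : ℝ} (hα : 0 ≤ α) : sQ Pm α ≤ sQ Q α := by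
  apply csInf_le_csInf (qset_bddBelow hP habP hα) (qset_nonempty hQ habQ α)
  intro x hx
  rcases hx with hx | hx
  · exact Or.inl (lt_of_le_of_lt (ENNReal.toReal_mono (measure_ne_top Q _) (hfsd x)) hx)
  · exact Or.inr (le_antisymm (hx ▸ hfsd x) (zero_le))

lemma clamp_mem {α : ℝ} : max 0 (min 1 α) ∈ Set.Icc (0:ℝ) 1 :=
  ⟨le_max_left 0 _, max_le zero_le_one (min_le_left 1 α)⟩

lemma cQ_eq_sQ {Q : Measure ℝ} {α : ℝ} (h0 : 0 ≤ α) (h1 : α ≤ 1) : cQ Q α = sQ Q α := by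
  unfold cQ
  rw [min_eq_right h1, max_eq_right h0]

lemma cQ_mono {Q : Measure ℝ} {a b : ℝ} (hQ : IsProbabilityMeasure Q)
    (hab : Q (Set.Icc a b) = 1) : Monotone (cQ Q) := by
  intro α β h
  exact sQ_mono hQ hab (le_max_left 0 _) (max_le_max le_rfl (min_le_min le_rfl h))

lemma cQ_measurable {Q : Measure ℝ} {a b : ℝ} (hQ : IsProbabilityMeasure Q)
    (hab : Q (Set.Icc a b) = 1) : Measurable (cQ Q) :=
  (cQ_mono hQ hab).measurable

lemma a_le_cQ {Q : Measure ℝ} {a b : ℝ} (hQ : IsProbabilityMeasure Q)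
    (hab : Q (Set.Icc a b) = 1) (α : ℝ) : a ≤ cQ Q α :=
  a_le_sQ hQ hab clamp_mem.1

lemma cQ_le_b {Q : Measure ℝ} {a b : ℝ} (hQ : IsProbabilityMeasure Q)
    (hab : Q (Set.Icc a b) = 1) (α : ℝ) : cQ Q α ≤ b :=
  sQ_le_b hQ hab clamp_mem.1

lemma cQ_abs_le {Q : Measure ℝ} {a b : ℝ} (hQ : IsProbabilityMeasure Q)
    (hab : Q (Set.Icc a b) = 1) (α : ℝ) : |cQ Q α| ≤ max |a| |b| := by
  rw [abs_le]
  constructor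
  · have := a_le_cQ hQ hab α
    have h2 : -|a| ≤ a := neg_abs_le a
    have h3 : |a| ≤ max |a| |b| := le_max_left _ _
    linarith
  · have := cQ_le_b hQ hab α
    have h2 : b ≤ |b| := le_abs_self b
    have h3 : |b| ≤ max |a| |b| := le_max_right _ _
    linarith

lemma cQ_fsd {Pm Q : Measure ℝ} (hP : IsProbabilityMeasure Pm) (hQ : IsProbabilityMeasure Q)
    {aP bP aQ bQ : ℝ} (habP : Pm (Set.Icc aP bP) = 1) (habQ : Q (Set.Icc aQ bQ) = 1)
    (hfsd : FSDle Pm Q) (α : ℝ) : cQ Pm α ≤ cQ Q α :=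
  sQ_fsd hP hQ habP habQ hfsd clamp_mem.1

lemma measure_eq_of_survival_eq {Pm Q : Measure ℝ} (hP : IsProbabilityMeasure Pm)
    (hQ : IsProbabilityMeasure Q) (h : ∀ x, Pm (Set.Ioi x) = Q (Set.Ioi x)) : Pm = Q := by
  refine Measure.ext_of_Iic Pm Q (fun x => ?_)
  have h1 : Set.Iic x = (Set.Ioi x)ᶜ := by simp
  rw [h1, measure_compl measurableSet_Ioi (measure_ne_top _ _),
      measure_compl measurableSet_Ioi (measure_ne_top _ _), h x, measure_univ, measure_univ]

lemma surv_toReal_le_one {Q : Measure ℝ} (hQ : IsProbabilityMeasure Q) (x : ℝ) :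
    (Q (Set.Ioi x)).toReal ≤ 1 := by
  have h := prob_le_one (μ := Q) (s := Set.Ioi x)
  have := ENNReal.toReal_mono (by simp) h
  simpa using this

lemma sQ_strict_gap {Pm Q : Measure ℝ} (hP : IsProbabilityMeasure Pm)
    (hQ : IsProbabilityMeasure Q) {aP bP aQ bQ : ℝ} (habP : Pm (Set.Icc aP bP) = 1)
    (habQ : Q (Set.Icc aQ bQ) = 1) {x₀ α : ℝ}
    (h1 : 1 - (Q (Set.Ioi x₀)).toReal < α) (h2 : α < 1 - (Pm (Set.Ioi x₀)).toReal) :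
    sQ Pm α ≤ x₀ ∧ x₀ < sQ Q α := by
  have hα0 : 0 ≤ α := by
    have := surv_toReal_le_one hQ x₀
    linarith
  have hα1 : α ≤ 1 := by
    have : 0 ≤ (Pm (Set.Ioi x₀)).toReal := ENNReal.toReal_nonneg
    linarith
  constructor
  · exact sQ_le_mem hP habP hα0 (Or.inl (by linarith))
  · exact lt_sQ hQ habQ hα1 (by linarith)

lemma exists_nonatom (Q : Measure ℝ) [IsFiniteMeasure Q] {u v : ℝ} (huv : u < v) :
    ∃ x, x ∈ Set.Ioo u v ∧ Q {x} = 0 := by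
  have hc : Set.Countable {x : ℝ | 0 < Q {x}} := by
    apply Measure.countable_meas_pos_of_disjoint_iUnion
      (As := fun x : ℝ => ({x} : Set ℝ)) (fun x => measurableSet_singleton x)
    intro x y hxy
    simp only [Function.onFun]
    exact Set.disjoint_singleton.mpr hxy
  have h2 : volume {x : ℝ | 0 < Q {x}} = 0 := hc.measure_zero _
  have h3 : volume (Set.Ioo u v \ {x : ℝ | 0 < Q {x}}) ≠ 0 := by
    rw [measure_diff_null h2, Real.volume_Ioo]
    simp only [ne_eq, ENNReal.ofReal_eq_zero, not_le]
    linarith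
  obtain ⟨x, hx⟩ := nonempty_of_measure_ne_zero h3
  refine ⟨x, hx.1, ?_⟩
  have := hx.2
  simp only [Set.mem_setOf_eq, not_lt, le_zero_iff] at this
  exact this

lemma sQ_tendsto {Qn : ℕ → Measure ℝ} {Q : Measure ℝ} (hQn : ∀ n, IsProbabilityMeasure (Qn n))
    (hQ : IsProbabilityMeasure Q) {a b : ℝ} (habn : ∀ n, Qn n (Set.Icc a b) = 1)
    {aq bq : ℝ} (hab : Q (Set.Icc aq bq) = 1)
    (hconv : ∀ x : ℝ, Q {x} = 0 →
      Tendsto (fun n => (Qn n (Set.Ioi x)).toReal) atTop (𝓝 ((Q (Set.Ioi x)).toReal)))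
    {α : ℝ} (hα : α ∈ Set.Ioo (0:ℝ) 1) (hcont : ContinuousAt (cQ Q) α) :
    Tendsto (fun n => sQ (Qn n) α) atTop (𝓝 (sQ Q α)) := by
  haveI := hQ
  haveI := fun n => hQn n
  rw [tendsto_order]
  constructor
  · -- lower bound
    intro c hc
    have hεpos : (0:ℝ) < sQ Q α - c := by linarith
    obtain ⟨δ, hδpos, hδ⟩ := Metric.continuousAt_iff.mp hcont _ hεpos
    set αs := α - min (δ/2) (α/2) with hαs
    have hmin : 0 < min (δ/2) (α/2) := lt_min (by linarith) (by linarith [hα.1])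
    have hαs1 : 0 < αs := by
      have h1 : min (δ/2) (α/2) ≤ α/2 := min_le_right _ _
      have := hα.1
      simp only [hαs]; linarith
    have hαs2 : αs < α := by simp only [hαs]; linarith
    have hdist : dist αs α < δ := by
      rw [Real.dist_eq, abs_sub_lt_iff]
      have h1 : min (δ/2) (α/2) ≤ δ/2 := min_le_left _ _
      constructor <;> simp only [hαs] <;> linarith
    have hval := hδ hdist
    rw [Real.dist_eq, cQ_eq_sQ hαs1.le (by linarith [hα.2]), cQ_eq_sQ hα.1.le hα.2.le,
      abs_sub_lt_iff] at hval
    have hcαs : c < sQ Q αs := by linarith [hval.2]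
    obtain ⟨x, hxmem, hxatom⟩ := exists_nonatom Q
      (show max c (sQ Q αs - 1) < sQ Q αs from max_lt hcαs (by linarith))
    have hxc : c < x := lt_of_le_of_lt (le_max_left _ _) hxmem.1
    have hxq : x ∉ qset Q αs := by
      intro hmem
      exact absurd (sQ_le_mem hQ hab hαs1.le hmem) (not_le.mpr hxmem.2)
    simp only [qset, Set.mem_setOf_eq, not_or, not_lt] at hxq
    have h5 : 1 - αs ≤ (Q (Set.Ioi x)).toReal := hxq.1
    have hev := (hconv x hxatom).eventually (eventually_gt_nhds
      (show 1 - α < (Q (Set.Ioi x)).toReal by linarith))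
    filter_upwards [hev] with n hn
    exact lt_trans hxc (lt_sQ (hQn n) (habn n) hα.2.le hn)
  · -- upper bound
    intro c hc
    have hεpos : (0:ℝ) < c - sQ Q α := by linarith
    obtain ⟨δ, hδpos, hδ⟩ := Metric.continuousAt_iff.mp hcont _ hεpos
    set αs := α + min (δ/2) ((1-α)/2) with hαs
    have hmin : 0 < min (δ/2) ((1-α)/2) := lt_min (by linarith) (by linarith [hα.2])
    have hαs1 : αs < 1 := by
      have h1 : min (δ/2) ((1-α)/2) ≤ (1-α)/2 := min_le_right _ _
      have := hα.2
      simp only [hαs]; linarith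
    have hαs2 : α < αs := by simp only [hαs]; linarith
    have hdist : dist αs α < δ := by
      rw [Real.dist_eq, abs_sub_lt_iff]
      have h1 : min (δ/2) ((1-α)/2) ≤ δ/2 := min_le_left _ _
      constructor <;> simp only [hαs] <;> linarith
    have hval := hδ hdist
    rw [Real.dist_eq, cQ_eq_sQ (by linarith [hα.1] : (0:ℝ) ≤ αs) hαs1.le,
      cQ_eq_sQ hα.1.le hα.2.le, abs_sub_lt_iff] at hval
    have hcαs : sQ Q αs < c := by linarith [hval.1]
    obtain ⟨y, hymem, hyc⟩ := exists_lt_of_csInf_lt (qset_nonempty hQ hab αs) hcαs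
    obtain ⟨x, hxmem, hxatom⟩ := exists_nonatom Q hyc
    have hxy : Q (Set.Ioi x) ≤ Q (Set.Ioi y) := measure_mono (Set.Ioi_subset_Ioi hxmem.1.le)
    have h5 : (Q (Set.Ioi x)).toReal < 1 - αs := by
      rcases hymem with hy | hy
      · exact lt_of_le_of_lt (ENNReal.toReal_mono (measure_ne_top Q _) hxy) hy
      · have : Q (Set.Ioi x) = 0 := le_antisymm (hy ▸ hxy) (zero_le)
        rw [this]
        simp only [ENNReal.toReal_zero]
        linarith
    have hev := (hconv x hxatom).eventually (eventually_lt_nhds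
      (show (Q (Set.Ioi x)).toReal < 1 - α by linarith))
    filter_upwards [hev] with n hn
    exact lt_of_le_of_lt (sQ_le_mem (hQn n) (habn n) hα.1.le (Or.inl hn)) hxmem.2


open scoped Classical

variable {Ω : Type*} [G : MeasurableSpace Ω]

/-- pick a subset of prescribed measure, junk value `∅` otherwise -/
def halfSet (P : Measure Ω) (hatom : AtomlessOn G P) (A : Set Ω) (r : ENNReal) : Set Ω :=
  if h : MeasurableSet A ∧ r ≤ P A then (hatom A h.1 r h.2).choose else ∅

variable {P : Measure Ω} (hatom : AtomlessOn G P)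

lemma halfSet_subset (A : Set Ω) (r : ENNReal) : halfSet P hatom A r ⊆ A := by
  unfold halfSet
  split_ifs with h
  · exact (hatom A h.1 r h.2).choose_spec.2.1
  · exact Set.empty_subset A

lemma halfSet_meas (A : Set Ω) (r : ENNReal) : MeasurableSet (halfSet P hatom A r) := by
  unfold halfSet
  split_ifs with h
  · exact (hatom A h.1 r h.2).choose_spec.1
  · exact MeasurableSet.empty

lemma halfSet_measure {A : Set Ω} {r : ENNReal} (hA : MeasurableSet A) (hr : r ≤ P A) :
    P (halfSet P hatom A r) = r := by
  unfold halfSet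
  rw [dif_pos ⟨hA, hr⟩]
  exact (hatom A hA r hr).choose_spec.2.2

/-- nested dyadic sets: `dyad n k` has measure `min (k/2^n) 1` -/
def dyad (hatom : AtomlessOn G P) : ℕ → ℕ → Set Ω
  | 0, k => if k = 0 then ∅ else Set.univ
  | n+1, k =>
    if k % 2 = 0 then dyad hatom n (k / 2)
    else dyad hatom n (k / 2) ∪
      halfSet P hatom (dyad hatom n (k / 2 + 1) \ dyad hatom n (k / 2)) (((2 : ENNReal))⁻¹ ^ (n + 1))

lemma dyad_zero : ∀ n, dyad hatom n 0 = ∅ := by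
  intro n
  induction n with
  | zero => simp [dyad]
  | succ n ih => simp [dyad, ih]

lemma dyad_univ : ∀ n k, 2^n ≤ k → dyad hatom n k = Set.univ := by
  intro n
  induction n with
  | zero =>
    intro k hk
    have : k ≠ 0 := by omega
    simp [dyad, this]
  | succ n ih =>
    intro k hk
    rcases Nat.even_or_odd k with he | ho
    · have h2 : k % 2 = 0 := Nat.even_iff.mp he
      have h3 : 2^n ≤ k / 2 := by omega
      simp [dyad, h2, ih _ h3]
    · have h2 : k % 2 = 1 := Nat.odd_iff.mp ho
      have h2' : ¬ (k % 2 = 0) := by omega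
      have h3 : 2^n ≤ k / 2 := by
        have : 2^(n+1) = 2 * 2^n := by ring
        omega
      simp only [dyad, h2', if_false]
      rw [ih _ h3]
      exact Set.univ_union _

lemma dyad_succ_subset : ∀ n k, dyad hatom n k ⊆ dyad hatom n (k+1) := by
  intro n
  induction n with
  | zero =>
    intro k
    rcases Nat.eq_zero_or_pos k with rfl | hk
    · simp [dyad]
    · have h1 : k ≠ 0 := by omega
      simp [dyad, h1]
  | succ n ih =>
    intro k
    rcases Nat.even_or_odd k with he | ho
    · have h2 : k % 2 = 0 := Nat.even_iff.mp he
      have h3 : (k+1) % 2 ≠ 0 := by omega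
      have h4 : (k+1) / 2 = k / 2 := by omega
      simp only [dyad, h2, if_true, h3, if_false, h4]
      exact Set.subset_union_left
    · have h2 : k % 2 = 1 := Nat.odd_iff.mp ho
      have h2' : ¬ (k % 2 = 0) := by omega
      have h3 : (k+1) % 2 = 0 := by omega
      have h4 : (k+1) / 2 = k / 2 + 1 := by omega
      simp only [dyad, h2', if_false, h3, if_true, h4]
      apply Set.union_subset (ih _)
      exact (halfSet_subset hatom _ _).trans Set.diff_subset

lemma dyad_mono (n : ℕ) : Monotone (dyad hatom n) :=
  monotone_nat_of_le_succ (fun k => dyad_succ_subset hatom n k)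

lemma dyad_meas : ∀ n k, MeasurableSet (dyad hatom n k) := by
  intro n
  induction n with
  | zero =>
    intro k
    rcases Nat.eq_zero_or_pos k with rfl | hk
    · simp [dyad]
    · have h1 : k ≠ 0 := by omega
      simp [dyad, h1]
  | succ n ih =>
    intro k
    by_cases h2 : k % 2 = 0
    · simp only [dyad, h2, if_true]; exact ih _
    · simp only [dyad, h2, if_false]
      exact (ih _).union (halfSet_meas hatom _ _)

lemma two_inv_pow_ne_top (n : ℕ) : ((2:ENNReal))⁻¹ ^ n ≠ ⊤ :=
  ENNReal.pow_ne_top (ENNReal.inv_ne_top.mpr (by norm_num))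

lemma two_mul_inv_cancel : (2:ENNReal) * 2⁻¹ = 1 :=
  ENNReal.mul_inv_cancel (by norm_num) (by norm_num)

lemma two_pow_mul_inv_pow (n : ℕ) : ((2^n : ℕ) : ENNReal) * ((2:ENNReal))⁻¹ ^ n = 1 := by
  push_cast
  rw [← mul_pow, two_mul_inv_cancel, one_pow]

lemma dyad_measure (hP : IsProbabilityMeasure P) :
    ∀ n k, P (dyad hatom n k) = ((min k (2^n) : ℕ) : ENNReal) * ((2:ENNReal))⁻¹ ^ n := by
  intro n
  induction n with
  | zero =>
    intro k
    rcases Nat.eq_zero_or_pos k with rfl | hk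
    · simp [dyad]
    · have h1 : k ≠ 0 := by omega
      have h2 : k ⊓ 1 = 1 := by omega
      simp [dyad, h1, h2]
  | succ n ih =>
    intro k
    by_cases h2 : k % 2 = 0
    · -- even case
      obtain ⟨j, rfl⟩ : ∃ j, k = 2 * j := ⟨k / 2, by omega⟩
      have h3 : (2 * j) / 2 = j := by omega
      simp only [dyad, h2, if_true, h3]
      rw [ih j]
      have h4 : min (2*j) (2^(n+1)) = 2 * min j (2^n) := by
        have : 2^(n+1) = 2 * 2^n := by ring
        omega
      rw [h4]
      have hm : ((2 * (j ⊓ 2^n) : ℕ) : ENNReal) = 2 * ((j ⊓ 2^n : ℕ) : ENNReal) := by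
        push_cast; ring
      rw [hm, pow_succ,
        show (2:ENNReal) * ((j ⊓ 2^n : ℕ) : ENNReal) * (((2:ENNReal))⁻¹^n * 2⁻¹)
          = ((j ⊓ 2^n : ℕ) : ENNReal) * ((2:ENNReal))⁻¹^n * (2 * 2⁻¹) from by ring,
        two_mul_inv_cancel, mul_one]
    · -- odd case
      obtain ⟨j, rfl⟩ : ∃ j, k = 2 * j + 1 := ⟨k / 2, by omega⟩
      have h3 : (2 * j + 1) / 2 = j := by omega
      simp only [dyad, h2, if_false, h3]
      rcases le_or_gt (j+1) (2^n) with hj | hj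
      · -- j + 1 ≤ 2^n : genuine split
        have hmeasj : P (dyad hatom n j) = (j : ENNReal) * ((2:ENNReal))⁻¹ ^ n := by
          rw [ih j]; congr 2; omega
        have hmeasj1 : P (dyad hatom n (j+1)) = ((j:ENNReal) + 1) * ((2:ENNReal))⁻¹ ^ n := by
          rw [ih (j+1)]
          have : min (j+1) (2^n) = j + 1 := by omega
          rw [this]; push_cast; ring
        have hsub : dyad hatom n j ⊆ dyad hatom n (j+1) := dyad_mono hatom n (by omega)
        have hdiff : P (dyad hatom n (j+1) \ dyad hatom n j)
            = ((2:ENNReal))⁻¹ ^ n := by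
          rw [measure_diff hsub (dyad_meas hatom n j).nullMeasurableSet (measure_ne_top P _),
            hmeasj, hmeasj1, add_mul, one_mul, ENNReal.add_sub_cancel_left]
          exact ENNReal.mul_ne_top (by simp) (two_inv_pow_ne_top n)
        have hr : ((2:ENNReal))⁻¹ ^ (n+1) ≤ P (dyad hatom n (j+1) \ dyad hatom n j) := by
          rw [hdiff, pow_succ]
          calc ((2:ENNReal))⁻¹ ^ n * 2⁻¹ ≤ ((2:ENNReal))⁻¹ ^ n * 1 := by
                exact mul_le_mul_right (by norm_num) _
            _ = ((2:ENNReal))⁻¹ ^ n := mul_one _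
        have hhalf : P (halfSet P hatom (dyad hatom n (j+1) \ dyad hatom n j)
            (((2:ENNReal))⁻¹ ^ (n+1))) = ((2:ENNReal))⁻¹ ^ (n+1) :=
          halfSet_measure hatom ((dyad_meas hatom n (j+1)).diff (dyad_meas hatom n j)) hr
        have hdisj : Disjoint (dyad hatom n j)
            (halfSet P hatom (dyad hatom n (j+1) \ dyad hatom n j) (((2:ENNReal))⁻¹ ^ (n+1))) := by
          apply Set.disjoint_of_subset_right (halfSet_subset hatom _ _)
          exact Set.disjoint_sdiff_right
        rw [measure_union hdisj (halfSet_meas hatom _ _), hmeasj, hhalf]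
        have h5 : min (2*j+1) (2^(n+1)) = 2*j+1 := by
          have : 2^(n+1) = 2 * 2^n := by ring
          omega
        have hm : ((2*j+1:ℕ):ENNReal) = 2*(j:ENNReal)+1 := by push_cast; ring
        rw [h5, hm, pow_succ, add_mul, one_mul]
        congr 1
        rw [show (2:ENNReal)*(j:ENNReal)*(((2:ENNReal))⁻¹^n*2⁻¹)
            = (j:ENNReal) * ((2:ENNReal))⁻¹^n * (2*2⁻¹) from by ring,
          two_mul_inv_cancel, mul_one]
      · -- j ≥ 2^n : everything is already univ
        have huniv : dyad hatom n j = Set.univ := dyad_univ hatom n j (by omega)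
        rw [huniv, Set.univ_union, measure_univ]
        have h5 : min (2*j+1) (2^(n+1)) = 2^(n+1) := by
          have : 2^(n+1) = 2 * 2^n := by ring
          omega
        rw [h5, two_pow_mul_inv_pow]


lemma dyad_double (n k : ℕ) : dyad hatom (n+1) (2*k) = dyad hatom n k := by
  have h2 : (2*k) % 2 = 0 := by omega
  have h3 : (2*k) / 2 = k := by omega
  simp only [dyad, h2, if_true, h3]

lemma dyad_level {n m : ℕ} (h : n ≤ m) (k : ℕ) :
    dyad hatom m (k * 2^(m-n)) = dyad hatom n k := by
  induction m with
  | zero =>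
    have : n = 0 := by omega
    subst this; simp
  | succ m ih =>
    rcases Nat.lt_or_ge n (m+1) with hlt | hge
    · have hnm : n ≤ m := by omega
      have h4 : k * 2^(m+1-n) = 2 * (k * 2^(m-n)) := by
        have : m+1-n = (m-n)+1 := by omega
        rw [this, pow_succ]; ring
      rw [h4, dyad_double hatom, ih hnm]
    · have : n = m+1 := by omega
      subst this; simp

lemma dyad_comparable (n k m j : ℕ) :
    dyad hatom n k ⊆ dyad hatom m j ∨ dyad hatom m j ⊆ dyad hatom n k := by
  rcases le_total n m with h | h
  · rw [← dyad_level hatom h k]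
    rcases le_total (k * 2^(m-n)) j with h2 | h2
    · exact Or.inl (dyad_mono hatom m h2)
    · exact Or.inr (dyad_mono hatom m h2)
  · rw [← dyad_level hatom h j]
    rcases le_total k (j * 2^(n-m)) with h2 | h2
    · exact Or.inl (dyad_mono hatom n h2)
    · exact Or.inr (dyad_mono hatom n h2)

/-- the uniform random variable -/
def unif (hatom : AtomlessOn G P) : Ω → ℝ :=
  fun ω => sInf {x : ℝ | ∃ n k : ℕ, ω ∈ dyad hatom n k ∧ x = (k:ℝ) / 2^n}

lemma uset_nonempty (ω : Ω) :
    {x : ℝ | ∃ n k : ℕ, ω ∈ dyad hatom n k ∧ x = (k:ℝ) / 2^n}.Nonempty := by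
  refine ⟨1, 0, 1, ?_, by norm_num⟩
  rw [dyad_univ hatom 0 1 (by norm_num)]
  trivial

lemma uset_bddBelow (ω : Ω) :
    BddBelow {x : ℝ | ∃ n k : ℕ, ω ∈ dyad hatom n k ∧ x = (k:ℝ) / 2^n} := by
  refine ⟨0, fun x hx => ?_⟩
  obtain ⟨n, k, _, rfl⟩ := hx
  positivity

lemma unif_nonneg (ω : Ω) : 0 ≤ unif hatom ω :=
  le_csInf (uset_nonempty hatom ω) (fun x hx => by
    obtain ⟨n, k, _, rfl⟩ := hx; positivity)

lemma unif_le_one (ω : Ω) : unif hatom ω ≤ 1 := by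
  apply csInf_le (uset_bddBelow hatom ω)
  refine ⟨0, 1, ?_, by norm_num⟩
  rw [dyad_univ hatom 0 1 (by norm_num)]
  trivial

lemma unif_lt_iff (x : ℝ) :
    {ω | unif hatom ω < x} = ⋃ (n : ℕ), ⋃ (k : ℕ), ⋃ (_ : (k:ℝ)/2^n < x), dyad hatom n k := by
  ext ω
  simp only [Set.mem_setOf_eq, Set.mem_iUnion]
  constructor
  · intro h
    obtain ⟨y, hy, hyx⟩ := exists_lt_of_csInf_lt (uset_nonempty hatom ω) h
    obtain ⟨n, k, hmem, rfl⟩ := hy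
    exact ⟨n, k, hyx, hmem⟩
  · rintro ⟨n, k, hk, hmem⟩
    calc unif hatom ω ≤ (k:ℝ)/2^n := csInf_le (uset_bddBelow hatom ω) ⟨n, k, hmem, rfl⟩
      _ < x := hk

lemma unif_measurable : Measurable (unif hatom) := by
  apply measurable_of_Iio
  intro x
  have h1 : unif hatom ⁻¹' (Set.Iio x) = {ω | unif hatom ω < x} := rfl
  rw [h1, unif_lt_iff hatom]
  exact MeasurableSet.iUnion (fun n => MeasurableSet.iUnion (fun k =>
    MeasurableSet.iUnion (fun _ => dyad_meas hatom n k)))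

lemma exists_dyadic_btwn {y x : ℝ} (hy : 0 ≤ y) (hxy : y < x) :
    ∃ n k : ℕ, y < (k:ℝ)/2^n ∧ (k:ℝ)/2^n < x := by
  obtain ⟨n, hn⟩ := exists_pow_lt_of_lt_one (sub_pos.mpr hxy) (by norm_num : (1:ℝ)/2 < 1)
  have h2n : (0:ℝ) < 2^n := by positivity
  have hpow : (1:ℝ)/2^n < x - y := by
    calc (1:ℝ)/2^n = (1/2)^n := by rw [div_pow, one_pow]
      _ < x - y := hn
  refine ⟨n, ⌊y * 2^n⌋₊ + 1, ?_, ?_⟩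
  · have h1 : y * 2^n < ⌊y * 2^n⌋₊ + 1 := Nat.lt_floor_add_one _
    rw [lt_div_iff₀ h2n]
    push_cast
    linarith
  · have h2 : (⌊y * 2^n⌋₊ : ℝ) ≤ y * 2^n := Nat.floor_le (by positivity)
    have h3 : 1 < (x-y) * 2^n := (div_lt_iff₀ h2n).mp hpow
    rw [div_lt_iff₀ h2n]
    push_cast
    nlinarith

lemma cast_mul_inv_pow (k n : ℕ) :
    ((k : ℕ) : ENNReal) * ((2:ENNReal))⁻¹ ^ n = ENNReal.ofReal ((k:ℝ)/2^n) := by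
  have h2 : ENNReal.ofReal ((2:ℝ)^n) = (2:ENNReal)^n := by
    rw [ENNReal.ofReal_pow (by norm_num)]
    norm_num
  rw [ENNReal.ofReal_div_of_pos (by positivity), ENNReal.ofReal_natCast, h2, div_eq_mul_inv,
    ← ENNReal.inv_pow]

lemma unif_law_lt (hP : IsProbabilityMeasure P) {x : ℝ} (hx0 : 0 ≤ x) (hx1 : x ≤ 1) :
    P {ω | unif hatom ω < x} = ENNReal.ofReal x := by
  rw [unif_lt_iff hatom]
  have hrw : (⋃ (n : ℕ), ⋃ (k : ℕ), ⋃ (_ : (k:ℝ)/2^n < x), dyad hatom n k)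
      = ⋃ (i : {p : ℕ × ℕ // (p.2:ℝ)/2^p.1 < x}), dyad hatom i.1.1 i.1.2 := by
    ext ω
    simp only [Set.mem_iUnion]
    constructor
    · rintro ⟨n, k, hk, hmem⟩; exact ⟨⟨⟨n, k⟩, hk⟩, hmem⟩
    · rintro ⟨⟨⟨n, k⟩, hk⟩, hmem⟩; exact ⟨n, k, hk, hmem⟩
  rw [hrw]
  have hdir : Directed (· ⊆ ·) (fun i : {p : ℕ × ℕ // (p.2:ℝ)/2^p.1 < x} =>
      dyad hatom i.1.1 i.1.2) := by
    intro p q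
    rcases dyad_comparable hatom p.1.1 p.1.2 q.1.1 q.1.2 with h | h
    · exact ⟨q, h, subset_rfl⟩
    · exact ⟨p, subset_rfl, h⟩
  rw [hdir.measure_iUnion]
  apply le_antisymm
  · apply iSup_le
    rintro ⟨⟨n, k⟩, hk⟩
    rw [dyad_measure hatom hP]
    calc ((min k (2^n) : ℕ) : ENNReal) * ((2:ENNReal))⁻¹ ^ n
        ≤ ((k:ℕ) : ENNReal) * ((2:ENNReal))⁻¹ ^ n := by
          exact mul_le_mul_left (Nat.cast_le.mpr (min_le_left _ _)) _
      _ = ENNReal.ofReal ((k:ℝ)/2^n) := cast_mul_inv_pow k n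
      _ ≤ ENNReal.ofReal x := ENNReal.ofReal_le_ofReal hk.le
  · rcases eq_or_lt_of_le hx0 with rfl | hxpos
    · simp
    have htop : (⨆ i : {p : ℕ × ℕ // (p.2:ℝ)/2^p.1 < x},
        P (dyad hatom i.1.1 i.1.2)) ≠ ⊤ := by
      apply ne_top_of_le_ne_top (measure_ne_top P Set.univ)
      exact iSup_le fun i => measure_mono (Set.subset_univ _)
    have key : x ≤ (⨆ i : {p : ℕ × ℕ // (p.2:ℝ)/2^p.1 < x},
        P (dyad hatom i.1.1 i.1.2)).toReal := by
      apply le_of_forall_lt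
      intro y hy
      rcases lt_or_ge y 0 with hy0 | hy0
      · apply lt_of_lt_of_le hy0
        exact ENNReal.toReal_nonneg
      · obtain ⟨n, k, h1, h2⟩ := exists_dyadic_btwn hy0 hy
        have hik : (k:ℝ)/2^n < x := h2
        have hk2n : k ≤ 2^n := by
          by_contra hc
          push_neg at hc
          have : (1:ℝ) < (k:ℝ)/2^n := by
            rw [lt_div_iff₀ (by positivity)]
            push_cast
            have : (2:ℝ)^n < k := by exact_mod_cast hc
            linarith
          linarith
        have hmem : P (dyad hatom n k) = ENNReal.ofReal ((k:ℝ)/2^n) := by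
          rw [dyad_measure hatom hP]
          have hmin : min k (2^n) = k := by omega
          rw [hmin, cast_mul_inv_pow k n]
        have hle : ENNReal.ofReal ((k:ℝ)/2^n) ≤ ⨆ i : {p : ℕ × ℕ // (p.2:ℝ)/2^p.1 < x},
            P (dyad hatom i.1.1 i.1.2) := by
          rw [← hmem]
          exact le_iSup (fun i : {p : ℕ × ℕ // (p.2:ℝ)/2^p.1 < x} =>
            P (dyad hatom i.1.1 i.1.2)) ⟨⟨n, k⟩, hik⟩
        calc y < (k:ℝ)/2^n := h1
          _ = (ENNReal.ofReal ((k:ℝ)/2^n)).toReal := by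
              rw [ENNReal.toReal_ofReal (by positivity)]
          _ ≤ _ := ENNReal.toReal_mono htop hle
    calc ENNReal.ofReal x ≤ ENNReal.ofReal ((⨆ i : {p : ℕ × ℕ // (p.2:ℝ)/2^p.1 < x},
          P (dyad hatom i.1.1 i.1.2)).toReal) := ENNReal.ofReal_le_ofReal key
      _ = _ := ENNReal.ofReal_toReal htop

lemma unif_lt_meas (x : ℝ) : MeasurableSet {ω | unif hatom ω < x} :=
  measurableSet_lt (unif_measurable hatom) measurable_const

lemma unif_le_meas (x : ℝ) : MeasurableSet {ω | unif hatom ω ≤ x} :=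
  measurableSet_le (unif_measurable hatom) measurable_const

lemma unif_law_le (hP : IsProbabilityMeasure P) {t : ℝ} (ht0 : 0 ≤ t) (ht1 : t ≤ 1) :
    P {ω | unif hatom ω ≤ t} = ENNReal.ofReal t := by
  rcases eq_or_lt_of_le ht1 with rfl | ht1'
  · have h1 : {ω | unif hatom ω ≤ 1} = Set.univ := by
      ext ω; simp [unif_le_one hatom ω]
    rw [h1, measure_univ]
    norm_num
  · apply le_antisymm
    · have hev1 : ∀ᶠ n : ℕ in atTop, t + 1/((n:ℝ)+1) ≤ 1 := by
        have htend : Tendsto (fun n : ℕ => t + 1/((n:ℝ)+1)) atTop (𝓝 (t + 0)) :=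
          tendsto_const_nhds.add tendsto_one_div_add_atTop_nhds_zero_nat
        rw [add_zero] at htend
        exact htend.eventually (eventually_le_nhds ht1')
      have hev : ∀ᶠ n : ℕ in atTop, P {ω | unif hatom ω ≤ t}
          ≤ ENNReal.ofReal (t + 1/((n:ℝ)+1)) := by
        filter_upwards [hev1] with n hn
        calc P {ω | unif hatom ω ≤ t} ≤ P {ω | unif hatom ω < t + 1/((n:ℝ)+1)} := by
              apply measure_mono
              intro ω hω
              have h0 : (0:ℝ) < 1/((n:ℝ)+1) := by positivity
              have hω' : unif hatom ω ≤ t := hω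
              simp only [Set.mem_setOf_eq]
              linarith
          _ = ENNReal.ofReal (t + 1/((n:ℝ)+1)) := unif_law_lt hatom hP (by positivity) hn
      have htend2 : Tendsto (fun n : ℕ => ENNReal.ofReal (t + 1/((n:ℝ)+1))) atTop
          (𝓝 (ENNReal.ofReal t)) := by
        have h1 : Tendsto (fun n : ℕ => t + 1/((n:ℝ)+1)) atTop (𝓝 t) := by
          have h2 : Tendsto (fun n : ℕ => t + 1/((n:ℝ)+1)) atTop (𝓝 (t + 0)) :=
            tendsto_const_nhds.add tendsto_one_div_add_atTop_nhds_zero_nat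
          rwa [add_zero] at h2
        exact (ENNReal.continuous_ofReal.continuousAt).tendsto.comp h1
      exact ge_of_tendsto htend2 hev
    · calc ENNReal.ofReal t = P {ω | unif hatom ω < t} := (unif_law_lt hatom hP ht0 ht1).symm
        _ ≤ P {ω | unif hatom ω ≤ t} := measure_mono (fun ω hω => (le_of_lt (hω : unif hatom ω < t) : unif hatom ω ≤ t))

lemma unif_atom_zero (hP : IsProbabilityMeasure P) (t : ℝ) :
    P {ω | unif hatom ω = t} = 0 := by
  rcases lt_or_ge t 0 with ht | ht0
  · have h1 : {ω | unif hatom ω = t} = ∅ := by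
      ext ω
      simp only [Set.mem_setOf_eq, Set.mem_empty_iff_false, iff_false]
      intro h
      exact absurd (h ▸ unif_nonneg hatom ω) (not_le.mpr ht)
    rw [h1, measure_empty]
  rcases le_or_gt t 1 with ht1 | ht1
  · have hsub : {ω | unif hatom ω = t} ⊆ {ω | unif hatom ω ≤ t} \ {ω | unif hatom ω < t} := by
      intro ω hω
      rw [Set.mem_setOf_eq] at hω
      exact ⟨le_of_eq hω, by rw [Set.mem_setOf_eq, hω]; exact lt_irrefl t⟩
    have hss : {ω | unif hatom ω < t} ⊆ {ω | unif hatom ω ≤ t} :=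
      fun ω hω => (le_of_lt (hω : unif hatom ω < t) : unif hatom ω ≤ t)
    apply le_antisymm _ (zero_le)
    calc P {ω | unif hatom ω = t} ≤ P ({ω | unif hatom ω ≤ t} \ {ω | unif hatom ω < t}) :=
          measure_mono hsub
      _ = P {ω | unif hatom ω ≤ t} - P {ω | unif hatom ω < t} :=
          measure_diff hss (unif_lt_meas hatom t).nullMeasurableSet (measure_ne_top P _)
      _ = ENNReal.ofReal t - ENNReal.ofReal t := by
          rw [unif_law_le hatom hP ht0 ht1, unif_law_lt hatom hP ht0 ht1]
      _ = 0 := tsub_self _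
  · have h1 : {ω | unif hatom ω = t} = ∅ := by
      ext ω
      simp only [Set.mem_setOf_eq, Set.mem_empty_iff_false, iff_false]
      intro h
      exact absurd (h ▸ unif_le_one hatom ω) (not_le.mpr ht1)
    rw [h1, measure_empty]

lemma unif_law_gt (hP : IsProbabilityMeasure P) {t : ℝ} (ht0 : 0 ≤ t) (ht1 : t ≤ 1) :
    P {ω | t < unif hatom ω} = ENNReal.ofReal (1 - t) := by
  have h1 : {ω | t < unif hatom ω} = {ω | unif hatom ω ≤ t}ᶜ := by
    ext ω; simp [not_le]
  rw [h1, measure_compl (unif_le_meas hatom t) (measure_ne_top P _), measure_univ,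
    unif_law_le hatom hP ht0 ht1]
  rw [← ENNReal.ofReal_one, ← ENNReal.ofReal_sub _ ht0]

lemma unif_law_interval (hP : IsProbabilityMeasure P) {u v : ℝ} (hu0 : 0 ≤ u) (hv1 : v ≤ 1) :
    ENNReal.ofReal (v - u) ≤ P {ω | u < unif hatom ω ∧ unif hatom ω < v} := by
  rcases le_or_gt v u with hvu | huv
  · rw [ENNReal.ofReal_eq_zero.mpr (by linarith : v - u ≤ 0)]
    exact zero_le
  have hu1 : u ≤ 1 := by linarith
  have hv0 : 0 ≤ v := by linarith
  set A := {ω | u < unif hatom ω} with hA_def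
  set B := {ω | unif hatom ω < v} with hB_def
  have hsplit : P A = P (A ∩ B) + P (A \ B) :=
    (measure_inter_add_diff A (unif_lt_meas hatom v)).symm
  have hAB : P (A \ B) ≤ ENNReal.ofReal (1 - v) := by
    calc P (A \ B) ≤ P Bᶜ := measure_mono (fun ω hω => hω.2)
      _ = 1 - P B := by
          rw [measure_compl (unif_lt_meas hatom v) (measure_ne_top P _), measure_univ]
      _ = ENNReal.ofReal (1 - v) := by
          rw [unif_law_lt hatom hP hv0 hv1, ← ENNReal.ofReal_one,
            ← ENNReal.ofReal_sub _ hv0]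
  have hA : P A = ENNReal.ofReal (1 - u) := unif_law_gt hatom hP hu0 hu1
  have hgoal : {ω | u < unif hatom ω ∧ unif hatom ω < v} = A ∩ B := rfl
  rw [hgoal]
  have hcancel : P (A ∩ B) = P A - P (A \ B) := by
    rw [hsplit, ENNReal.add_sub_cancel_right (lt_of_le_of_lt (measure_mono
      (Set.diff_subset)) (measure_lt_top P A)).ne]
  rw [hcancel]
  calc ENNReal.ofReal (v - u) = ENNReal.ofReal ((1-u) - (1-v)) := by ring_nf
    _ = ENNReal.ofReal (1-u) - ENNReal.ofReal (1-v) := ENNReal.ofReal_sub _ (by linarith)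
    _ ≤ P A - P (A \ B) := tsub_le_tsub (le_of_eq hA.symm) hAB


lemma comp_law (hP : IsProbabilityMeasure P) {Q : Measure ℝ} {a b : ℝ}
    (hQ : IsProbabilityMeasure Q) (hab : Q (Set.Icc a b) = 1) (x : ℝ) :
    P {ω | x < cQ Q (unif hatom ω)} = Q (Set.Ioi x) := by
  have hcq : ∀ ω, cQ Q (unif hatom ω) = sQ Q (unif hatom ω) :=
    fun ω => cQ_eq_sQ (unif_nonneg hatom ω) (unif_le_one hatom ω)
  by_cases hS : Q (Set.Ioi x) = 0
  · have hempty : {ω | x < cQ Q (unif hatom ω)} = ∅ := by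
      ext ω
      simp only [Set.mem_setOf_eq, Set.mem_empty_iff_false, iff_false, not_lt, hcq ω]
      exact sQ_le_mem hQ hab (unif_nonneg hatom ω) (Or.inr hS)
    rw [hempty, measure_empty, hS]
  · set s := (Q (Set.Ioi x)).toReal with hs_def
    have hs_pos : 0 < s := ENNReal.toReal_pos hS (measure_ne_top Q _)
    have hs_le : s ≤ 1 := surv_toReal_le_one hQ x
    have hsub1 : {ω | 1 - s < unif hatom ω} ⊆ {ω | x < cQ Q (unif hatom ω)} := by
      intro ω hω
      rw [Set.mem_setOf_eq] at hω ⊢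
      rw [hcq ω]
      exact lt_sQ hQ hab (unif_le_one hatom ω) (by linarith)
    have hsub2 : {ω | x < cQ Q (unif hatom ω)} ⊆ {ω | 1 - s ≤ unif hatom ω} := by
      intro ω hω
      rw [Set.mem_setOf_eq] at hω ⊢
      by_contra hcon
      push_neg at hcon
      have h2 : s < 1 - unif hatom ω := by linarith
      have h3 : sQ Q (unif hatom ω) ≤ x :=
        sQ_le_mem hQ hab (unif_nonneg hatom ω) (Or.inl (by rw [← hs_def]; linarith))
      rw [hcq ω] at hω
      linarith
    have h10 : (0:ℝ) ≤ 1 - s := by linarith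
    have h11 : 1 - s ≤ 1 := by linarith
    have hgt : P {ω | 1 - s < unif hatom ω} = ENNReal.ofReal s := by
      rw [unif_law_gt hatom hP h10 h11]
      congr 1
      ring
    have hge : P {ω | 1 - s ≤ unif hatom ω} = ENNReal.ofReal s := by
      apply le_antisymm
      · have hsplit : {ω | 1 - s ≤ unif hatom ω}
            ⊆ {ω | 1 - s < unif hatom ω} ∪ {ω | unif hatom ω = 1 - s} := by
          intro ω hω
          rw [Set.mem_setOf_eq] at hω
          rcases lt_or_eq_of_le hω with h | h
          · exact Or.inl h
          · exact Or.inr h.symm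
        calc P {ω | 1 - s ≤ unif hatom ω}
            ≤ P ({ω | 1 - s < unif hatom ω} ∪ {ω | unif hatom ω = 1 - s}) :=
              measure_mono hsplit
          _ ≤ P {ω | 1 - s < unif hatom ω} + P {ω | unif hatom ω = 1 - s} :=
              measure_union_le _ _
          _ = ENNReal.ofReal s := by
              rw [hgt, unif_atom_zero hatom hP, add_zero]
      · rw [← hgt]
        exact measure_mono (fun ω hω =>
          (le_of_lt (hω : 1 - s < unif hatom ω) : 1 - s ≤ unif hatom ω))
    have hfinal : P {ω | x < cQ Q (unif hatom ω)} = ENNReal.ofReal s :=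
      le_antisymm (hge ▸ measure_mono hsub2) (hgt ▸ measure_mono hsub1)
    rw [hfinal, hs_def, ENNReal.ofReal_toReal (measure_ne_top Q _)]

end Stmt8Aux


namespace Stmt8CE

open Stmt8Aux

variable {Ω : Type*}

/-- certainty equivalent -/
def CE (pref : (Ω → ℝ) → (Ω → ℝ) → Prop) (X : Ω → ℝ) : ℝ :=
  sSup {c : ℝ | pref X (fun _ => c)}

lemma bddG_bddF {F G : MeasurableSpace Ω} (hG : G ≤ F) {X : Ω → ℝ} (hX : BddMeas G X) :
    BddMeas F X := ⟨fun t ht => hG _ (hX.1 ht), hX.2⟩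

lemma const_bdd (m : MeasurableSpace Ω) (c : ℝ) : BddMeas m (fun _ => c) :=
  ⟨@measurable_const _ _ _ m _, |c|, fun _ => le_refl _⟩

section main

variable {F G : MeasurableSpace Ω} {P : @Measure Ω G}
  {pref : (Ω → ℝ) → (Ω → ℝ) → Prop}
  (hG : G ≤ F) (hP : @IsProbabilityMeasure Ω G P)
  (hpref : TotalPreorderOn F pref) (hM : AxiomM F pref)
  (hSRM : AxiomSRM G P pref) (hC : AxiomC F pref)

include hP hSRM in
lemma const_strict {c c' : ℝ} (h : c' < c) :
    pref (fun _ => c) (fun _ => c') ∧ ¬ pref (fun _ => c') (fun _ => c) := by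
  apply hSRM (fun _ => c) (fun _ => c') (const_bdd G c) (const_bdd G c')
  · have h1 : {ω : Ω | (fun _ => c') ω ≤ (fun _ => c) ω} = Set.univ := by
      ext ω; simp [h.le]
    rw [h1]
    exact measure_univ
  · have h1 : {ω : Ω | (fun _ => c') ω < (fun _ => c) ω} = Set.univ := by
      ext ω; simp [h]
    rw [h1, measure_univ]
    norm_num

include hP hSRM in
lemma ce_set_ub {X : Ω → ℝ} (hX : BddMeas G X) {M : ℝ} (hMb : ∀ ω, |X ω| ≤ M) :
    ∀ c ∈ {c : ℝ | pref X (fun _ => c)}, c ≤ M := by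
  intro c hc
  by_contra hcon
  push_neg at hcon
  refine absurd hc ((hSRM (fun _ => c) X (const_bdd G c) hX ?_ ?_).2)
  · have h1 : {ω : Ω | X ω ≤ (fun _ => c) ω} = Set.univ := by
      ext ω
      simp only [Set.mem_setOf_eq, Set.mem_univ, iff_true]
      have := abs_le.mp (hMb ω)
      linarith
    rw [h1]
    exact measure_univ
  · have h1 : {ω : Ω | X ω < (fun _ => c) ω} = Set.univ := by
      ext ω
      simp only [Set.mem_setOf_eq, Set.mem_univ, iff_true]
      have := abs_le.mp (hMb ω)
      linarith
    rw [h1, measure_univ]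
    norm_num

include hG hM in
lemma ce_set_mem_neg {X : Ω → ℝ} (hX : BddMeas G X) {M : ℝ} (hMb : ∀ ω, |X ω| ≤ M) :
    -M ∈ {c : ℝ | pref X (fun _ => c)} :=
  hM X (fun _ => -M) (bddG_bddF hG hX) (const_bdd F _) (fun ω => (abs_le.mp (hMb ω)).1)

include hG hP hpref hM hSRM hC in
lemma ce_spec {X : Ω → ℝ} (hX : BddMeas G X) :
    pref X (fun _ => CE pref X) ∧ pref (fun _ => CE pref X) X := by
  obtain ⟨M, hMb⟩ := hX.2
  set S := {c : ℝ | pref X (fun _ => c)} with hS_def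
  have hne : S.Nonempty := ⟨-M, ce_set_mem_neg hG hM hX hMb⟩
  have hbdd : BddAbove S := ⟨M, fun c hc => ce_set_ub hP hSRM hX hMb c hc⟩
  have hmem_lt : ∀ c < sSup S, c ∈ S := by
    intro c hc
    obtain ⟨c', hc', hcc'⟩ := exists_lt_of_lt_csSup hne hc
    exact hpref.2 X _ _ (bddG_bddF hG hX) (const_bdd F c') (const_bdd F c) hc'
      (hM _ _ (const_bdd F c') (const_bdd F c) (fun ω => hcc'.le))
  have hCE : CE pref X = sSup S := rfl
  constructor
  · have hseq : ∀ n : ℕ, pref X (fun _ => sSup S - 1/((n:ℝ)+1)) := by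
      intro n
      apply hmem_lt
      have h0 : (0:ℝ) < 1/((n:ℝ)+1) := by positivity
      linarith
    have hcc := hC X (bddG_bddF hG hX) (fun n => fun _ => sSup S - 1/((n:ℝ)+1))
      (fun _ => sSup S) (fun n => const_bdd F _) (const_bdd F _)
      ⟨|sSup S| + 1, fun n ω => ?_⟩ (fun ω => ?_)
    · rw [hCE]
      exact hcc.1 hseq
    · have h0 : (0:ℝ) < 1/((n:ℝ)+1) := by positivity
      have h1 : (1:ℝ)/((n:ℝ)+1) ≤ 1 := by
        rw [div_le_one (by positivity)]
        simp
      have h2 := abs_sub (sSup S) (1/((n:ℝ)+1))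
      calc |sSup S - 1/((n:ℝ)+1)| ≤ |sSup S| + |1/((n:ℝ)+1)| := abs_sub _ _
        _ ≤ |sSup S| + 1 := by
            rw [abs_of_pos h0] at *
            linarith
    · have h1 : Tendsto (fun n : ℕ => sSup S - 1/((n:ℝ)+1)) atTop (𝓝 (sSup S - 0)) :=
        tendsto_const_nhds.sub tendsto_one_div_add_atTop_nhds_zero_nat
      rwa [sub_zero] at h1
  · have hseq : ∀ n : ℕ, pref (fun _ => sSup S + 1/((n:ℝ)+1)) X := by
      intro n
      have h0 : (0:ℝ) < 1/((n:ℝ)+1) := by positivity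
      have hnotin : sSup S + 1/((n:ℝ)+1) ∉ S := by
        intro hmem
        have := le_csSup hbdd hmem
        linarith
      rcases hpref.1 X (fun _ => sSup S + 1/((n:ℝ)+1)) (bddG_bddF hG hX)
        (const_bdd F _) with h | h
      · exact absurd h hnotin
      · exact h
    have hcc := hC X (bddG_bddF hG hX) (fun n => fun _ => sSup S + 1/((n:ℝ)+1))
      (fun _ => sSup S) (fun n => const_bdd F _) (const_bdd F _)
      ⟨|sSup S| + 1, fun n ω => ?_⟩ (fun ω => ?_)
    · rw [hCE]
      exact hcc.2 hseq
    · have h0 : (0:ℝ) < 1/((n:ℝ)+1) := by positivity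
      have h1 : (1:ℝ)/((n:ℝ)+1) ≤ 1 := by
        rw [div_le_one (by positivity)]
        simp
      calc |sSup S + 1/((n:ℝ)+1)| ≤ |sSup S| + |1/((n:ℝ)+1)| := abs_add_le _ _
        _ ≤ |sSup S| + 1 := by
            rw [abs_of_pos h0] at *
            linarith
    · have h1 : Tendsto (fun n : ℕ => sSup S + 1/((n:ℝ)+1)) atTop (𝓝 (sSup S + 0)) :=
        tendsto_const_nhds.add tendsto_one_div_add_atTop_nhds_zero_nat
      rwa [add_zero] at h1

include hG hP hM hSRM in
lemma ce_bound {X : Ω → ℝ} (hX : BddMeas G X) {M : ℝ} (hMb : ∀ ω, |X ω| ≤ M) :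
    |CE pref X| ≤ M := by
  rw [abs_le]
  constructor
  · exact le_csSup ⟨M, fun c hc => ce_set_ub hP hSRM hX hMb c hc⟩
      (ce_set_mem_neg hG hM hX hMb)
  · exact csSup_le ⟨-M, ce_set_mem_neg hG hM hX hMb⟩
      (fun c hc => ce_set_ub hP hSRM hX hMb c hc)

include hG hP hpref hM hSRM in
lemma ce_const (c : ℝ) : CE pref (fun _ => c) = c := by
  have hrefl : pref (fun _ => c) (fun _ => c) :=
    (hpref.1 _ _ (const_bdd F c) (const_bdd F c)).elim id id
  have hub : ∀ c' ∈ {c' : ℝ | pref (fun _ => c) (fun _ => c')}, c' ≤ c := by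
    intro c' hc'
    by_contra hcon
    push_neg at hcon
    exact (const_strict hP hSRM hcon).2 hc'
  exact le_antisymm (csSup_le ⟨c, hrefl⟩ hub) (le_csSup ⟨c, hub⟩ hrefl)

include hG hP hpref hM hSRM hC in
lemma ce_le_of_pref {X Y : Ω → ℝ} (hX : BddMeas G X) (hY : BddMeas G Y) (h : pref X Y) :
    CE pref Y ≤ CE pref X := by
  by_contra hcon
  push_neg at hcon
  have hstrict := const_strict hP hSRM (G := G) hcon
  have h1 : pref (fun _ => CE pref X) X := (ce_spec hG hP hpref hM hSRM hC hX).2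
  have h2 : pref Y (fun _ => CE pref Y) := (ce_spec hG hP hpref hM hSRM hC hY).1
  have h3 := hpref.2 _ _ _ (const_bdd F _) (bddG_bddF hG hX) (bddG_bddF hG hY) h1 h
  have h4 := hpref.2 _ _ _ (const_bdd F _) (bddG_bddF hG hY) (const_bdd F _) h3 h2
  exact hstrict.2 h4

include hG hP hpref hM hSRM hC in
lemma pref_of_ce_le {X Y : Ω → ℝ} (hX : BddMeas G X) (hY : BddMeas G Y)
    (h : CE pref Y ≤ CE pref X) : pref X Y := by
  have h1 : pref X (fun _ => CE pref X) := (ce_spec hG hP hpref hM hSRM hC hX).1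
  have h2 : pref (fun _ => CE pref Y) Y := (ce_spec hG hP hpref hM hSRM hC hY).2
  have hm : pref (fun _ => CE pref X) (fun _ => CE pref Y) :=
    hM _ _ (const_bdd F _) (const_bdd F _) (fun ω => h)
  have h3 := hpref.2 _ _ _ (bddG_bddF hG hX) (const_bdd F _) (const_bdd F _) h1 hm
  exact hpref.2 _ _ _ (bddG_bddF hG hX) (const_bdd F _) (bddG_bddF hG hY) h3 h2

include hG hP hpref hM hSRM hC in
lemma ce_strict {X Y : Ω → ℝ} (hX : BddMeas G X) (hY : BddMeas G Y)
    (h1 : P {ω | Y ω ≤ X ω} = 1) (h2 : 0 < P {ω | Y ω < X ω}) :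
    CE pref Y < CE pref X := by
  have hs := hSRM X Y hX hY h1 h2
  rcases lt_or_eq_of_le (ce_le_of_pref hG hP hpref hM hSRM hC hX hY hs.1) with h | h
  · exact h
  · exact absurd (pref_of_ce_le hG hP hpref hM hSRM hC hY hX h.ge) hs.2

include hG hP hpref hM hSRM hC in
lemma le_ce_of_pref_const {X : Ω → ℝ} (hX : BddMeas G X) {c : ℝ}
    (h : pref X (fun _ => c)) : c ≤ CE pref X := by
  have := ce_le_of_pref hG hP hpref hM hSRM hC hX (const_bdd G c) h
  rwa [ce_const hG hP hpref hM hSRM (G := G)] at this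

include hG hP hpref hM hSRM hC in
lemma ce_le_of_const_pref {X : Ω → ℝ} (hX : BddMeas G X) {c : ℝ}
    (h : pref (fun _ => c) X) : CE pref X ≤ c := by
  have := ce_le_of_pref hG hP hpref hM hSRM hC (const_bdd G c) hX h
  rwa [ce_const hG hP hpref hM hSRM (G := G)] at this

include hG hP hpref hM hSRM hC in
lemma ce_tendsto {Yn : ℕ → Ω → ℝ} {Y : Ω → ℝ} (hYn : ∀ n, BddMeas G (Yn n))
    (hY : BddMeas G Y) (hbd : ∃ M : ℝ, ∀ n ω, |Yn n ω| ≤ M)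
    (hconv : ∀ ω, Tendsto (fun n => Yn n ω) atTop (𝓝 (Y ω))) :
    Tendsto (fun n => CE pref (Yn n)) atTop (𝓝 (CE pref Y)) := by
  obtain ⟨M, hMb⟩ := hbd
  have claim1 : ∀ z : ℝ, (∃ᶠ n in atTop, z ≤ CE pref (Yn n)) → z ≤ CE pref Y := by
    intro z hfreq
    obtain ⟨φ, hφmono, hφ⟩ := Filter.extraction_of_frequently_atTop hfreq
    have hpref_n : ∀ k, pref (Yn (φ k)) (fun _ => z) := by
      intro k
      have ha := (ce_spec hG hP hpref hM hSRM hC (hYn (φ k))).1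
      have hb : pref (fun _ => CE pref (Yn (φ k))) (fun _ => z) :=
        hM _ _ (const_bdd F _) (const_bdd F _) (fun ω => hφ k)
      exact hpref.2 _ _ _ (bddG_bddF hG (hYn (φ k))) (const_bdd F _) (const_bdd F _) ha hb
    have hcc := hC (fun _ => z) (const_bdd F z) (fun k => Yn (φ k)) Y
      (fun k => bddG_bddF hG (hYn (φ k))) (bddG_bddF hG hY)
      ⟨M, fun k ω => hMb (φ k) ω⟩
      (fun ω => (hconv ω).comp hφmono.tendsto_atTop)
    exact le_ce_of_pref_const hG hP hpref hM hSRM hC hY (hcc.2 hpref_n)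
  have claim2 : ∀ z : ℝ, (∃ᶠ n in atTop, CE pref (Yn n) ≤ z) → CE pref Y ≤ z := by
    intro z hfreq
    obtain ⟨φ, hφmono, hφ⟩ := Filter.extraction_of_frequently_atTop hfreq
    have hpref_n : ∀ k, pref (fun _ => z) (Yn (φ k)) := by
      intro k
      have ha := (ce_spec hG hP hpref hM hSRM hC (hYn (φ k))).2
      have hb : pref (fun _ => z) (fun _ => CE pref (Yn (φ k))) :=
        hM _ _ (const_bdd F _) (const_bdd F _) (fun ω => hφ k)
      exact hpref.2 _ _ _ (const_bdd F _) (const_bdd F _) (bddG_bddF hG (hYn (φ k))) hb ha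
    have hcc := hC (fun _ => z) (const_bdd F z) (fun k => Yn (φ k)) Y
      (fun k => bddG_bddF hG (hYn (φ k))) (bddG_bddF hG hY)
      ⟨M, fun k ω => hMb (φ k) ω⟩
      (fun ω => (hconv ω).comp hφmono.tendsto_atTop)
    exact ce_le_of_const_pref hG hP hpref hM hSRM hC hY (hcc.1 hpref_n)
  rw [Metric.tendsto_nhds]
  intro ε hε
  by_contra hcon
  rw [Filter.not_eventually] at hcon
  have hsplit : (∃ᶠ n in atTop, CE pref Y + ε ≤ CE pref (Yn n)) ∨
      (∃ᶠ n in atTop, CE pref (Yn n) ≤ CE pref Y - ε) := by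
    rw [← Filter.frequently_or_distrib]
    apply hcon.mono
    intro n hn
    rw [Real.dist_eq, not_lt] at hn
    rcases le_abs.mp hn with h | h
    · exact Or.inl (by linarith)
    · exact Or.inr (by linarith)
  rcases hsplit with h | h
  · have := claim1 _ h
    linarith
  · have := claim2 _ h
    linarith

end main

end Stmt8CE


lemma weakconv_surv {Qn : ℕ → Measure ℝ} {Q : Measure ℝ}
    (hQn : ∀ n, IsProbabilityMeasure (Qn n)) (hQ : IsProbabilityMeasure Q)
    (hw : WeakConv Qn Q) {x : ℝ} (hx : Q {x} = 0) :
    Filter.Tendsto (fun n => ((Qn n) (Set.Ioi x)).toReal) Filter.atTop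
      (nhds ((Q (Set.Ioi x)).toReal)) := by
  set μn : ℕ → ProbabilityMeasure ℝ := fun n => ⟨Qn n, hQn n⟩ with hμn
  set μ : ProbabilityMeasure ℝ := ⟨Q, hQ⟩ with hμ
  have hconv : Tendsto μn atTop (𝓝 μ) :=
    ProbabilityMeasure.tendsto_iff_forall_integral_tendsto.mpr (fun f => hw f)
  have hfr : (μ : Measure ℝ) (frontier (Set.Ioi x)) = 0 := by
    rw [frontier_Ioi]; exact hx
  have h1 := ProbabilityMeasure.tendsto_measure_of_null_frontier_of_tendsto' hconv hfr
  exact (ENNReal.tendsto_toReal (measure_ne_top _ _)).comp h1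

/-- under the regularity axioms, the pure-risk preferences are
represented by a statistic applied to pushforward distributions
(Proposition `prop:need1`). -/
theorem stmt8 {Ω : Type*} [F : MeasurableSpace Ω] (G : MeasurableSpace Ω) (hG : G ≤ F)
    (P : @Measure Ω G) (hP : @IsProbabilityMeasure Ω G P) (hatom : AtomlessOn G P)
    (pref : (Ω → ℝ) → (Ω → ℝ) → Prop) (hpref : TotalPreorderOn F pref)
    (hM : AxiomM F pref) (hRC : AxiomRC G P pref) (hSRM : AxiomSRM G P pref)
    (hC : AxiomC F pref) :
    ∃ γ : Measure ℝ → ℝ, IsStatistic γ ∧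
      ∀ X Y : Ω → ℝ, BddMeas G X → BddMeas G Y →
        (pref X Y ↔ γ (@Measure.map Ω ℝ G _ Y P) ≤ γ (@Measure.map Ω ℝ G _ X P)) := by
  classical
  obtain ⟨hprefTot, hprefTrans⟩ := id hpref
  -- shorthand
  set U : Ω → ℝ := Stmt8Aux.unif hatom with hU_def
  have hUmeas : @Measurable Ω ℝ G _ U := Stmt8Aux.unif_measurable hatom
  have hU0 : ∀ ω, 0 ≤ U ω := Stmt8Aux.unif_nonneg hatom
  have hU1 : ∀ ω, U ω ≤ 1 := Stmt8Aux.unif_le_one hatom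
  -- the realizer
  set R : Measure ℝ → Ω → ℝ := fun Q ω => Stmt8Aux.cQ Q (U ω) with hR_def
  have hRbdd : ∀ (Q : Measure ℝ) (a b : ℝ), IsProbabilityMeasure Q → Q (Set.Icc a b) = 1 →
      BddMeas G (R Q) := by
    intro Q a b hQ hab
    refine ⟨(Stmt8Aux.cQ_measurable hQ hab).comp hUmeas, max |a| |b|, fun ω => ?_⟩
    exact Stmt8Aux.cQ_abs_le hQ hab (U ω)
  have hRlaw : ∀ (Q : Measure ℝ) (a b : ℝ), IsProbabilityMeasure Q → Q (Set.Icc a b) = 1 →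
      ∀ x : ℝ, P {ω | x < R Q ω} = Q (Set.Ioi x) := by
    intro Q a b hQ hab x
    exact Stmt8Aux.comp_law hatom hP hQ hab x
  -- the statistic
  set γ : Measure ℝ → ℝ := fun Q => Stmt8CE.CE pref (R Q) with hγ_def
  -- CE invariance under equal survival functions
  have hCEeq : ∀ (X Y : Ω → ℝ), BddMeas G X → BddMeas G Y →
      (∀ x : ℝ, P {ω | x < X ω} = P {ω | x < Y ω}) →
      Stmt8CE.CE pref X = Stmt8CE.CE pref Y := by
    intro X Y hX hY hs
    have h12 := hRC X Y hX hY hs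
    exact le_antisymm (Stmt8CE.ce_le_of_pref hG hP hpref hM hSRM hC hY hX h12.2)
      (Stmt8CE.ce_le_of_pref hG hP hpref hM hSRM hC hX hY h12.1)
  -- facts about pushforwards
  have hmapdist : ∀ (X : Ω → ℝ), BddMeas G X →
      IsDistribution (@Measure.map Ω ℝ G _ X P) ∧
        (∀ x : ℝ, (@Measure.map Ω ℝ G _ X P) (Set.Ioi x) = P {ω | x < X ω}) := by
    intro X hX
    obtain ⟨M, hMb⟩ := hX.2
    have hprob : IsProbabilityMeasure (@Measure.map Ω ℝ G _ X P) :=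
      @Measure.isProbabilityMeasure_map Ω ℝ G _ P _ X hX.1.aemeasurable
    have hsurv : ∀ x : ℝ, (@Measure.map Ω ℝ G _ X P) (Set.Ioi x) = P {ω | x < X ω} := by
      intro x
      rw [@Measure.map_apply Ω ℝ G _ P X hX.1 _ measurableSet_Ioi]
      rfl
    have hsupp : (@Measure.map Ω ℝ G _ X P) (Set.Icc (-M) M) = 1 := by
      rw [@Measure.map_apply Ω ℝ G _ P X hX.1 _ measurableSet_Icc]
      have h1 : X ⁻¹' (Set.Icc (-M) M) = Set.univ := by
        ext ω
        simp only [Set.mem_preimage, Set.mem_Icc, Set.mem_univ, iff_true]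
        exact abs_le.mp (hMb ω)
      rw [h1]
      exact measure_univ
    exact ⟨⟨hprob, -M, M, hsupp⟩, hsurv⟩
  have hγrep : ∀ (X : Ω → ℝ), BddMeas G X →
      γ (@Measure.map Ω ℝ G _ X P) = Stmt8CE.CE pref X := by
    intro X hX
    obtain ⟨⟨hprob, a, b, hsupp⟩, hsurv⟩ := hmapdist X hX
    apply hCEeq _ _ (hRbdd _ a b hprob hsupp) hX
    intro x
    rw [hRlaw _ a b hprob hsupp x, hsurv x]
  refine ⟨γ, ⟨?_, ?_, ?_⟩, ?_⟩
  · -- monotone in FSD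
    intro Q P' hQd hPd hfsd
    obtain ⟨aQ, bQ, habQ⟩ := hQd.2
    obtain ⟨aP, bP, habP⟩ := hPd.2
    have hpt : ∀ ω, R P' ω ≤ R Q ω := fun ω =>
      Stmt8Aux.cQ_fsd hPd.1 hQd.1 habP habQ hfsd (U ω)
    have hprefQ : pref (R Q) (R P') :=
      hM _ _ (Stmt8CE.bddG_bddF hG (hRbdd Q aQ bQ hQd.1 habQ))
        (Stmt8CE.bddG_bddF hG (hRbdd P' aP bP hPd.1 habP)) hpt
    exact Stmt8CE.ce_le_of_pref hG hP hpref hM hSRM hC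
      (hRbdd Q aQ bQ hQd.1 habQ) (hRbdd P' aP bP hPd.1 habP) hprefQ
  · -- strict monotonicity
    intro Q P' hQd hPd hfsd hne
    haveI := hQd.1
    haveI := hPd.1
    obtain ⟨aQ, bQ, habQ⟩ := hQd.2
    obtain ⟨aP, bP, habP⟩ := hPd.2
    obtain ⟨x₀, hx₀⟩ : ∃ x₀, P' (Set.Ioi x₀) < Q (Set.Ioi x₀) := by
      by_contra hcon
      push_neg at hcon
      exact hne (Stmt8Aux.measure_eq_of_survival_eq hQd.1 hPd.1
        (fun x => le_antisymm (hcon x) (hfsd x)))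
    set sP := (P' (Set.Ioi x₀)).toReal with hsP_def
    set sQ' := (Q (Set.Ioi x₀)).toReal with hsQ'_def
    have hsPlt : sP < sQ' :=
      (ENNReal.toReal_lt_toReal (measure_ne_top _ _) (measure_ne_top _ _)).mpr hx₀
    have hsub : {ω | 1 - sQ' < U ω ∧ U ω < 1 - sP} ⊆ {ω | R P' ω < R Q ω} := by
      rintro ω ⟨h1, h2⟩
      have hgap := Stmt8Aux.sQ_strict_gap hPd.1 hQd.1 habP habQ
        (x₀ := x₀) (α := U ω) (by rw [← hsQ'_def]; linarith) (by rw [← hsP_def]; linarith)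
      have hc1 : R P' ω = Stmt8Aux.sQ P' (U ω) := Stmt8Aux.cQ_eq_sQ (hU0 ω) (hU1 ω)
      have hc2 : R Q ω = Stmt8Aux.sQ Q (U ω) := Stmt8Aux.cQ_eq_sQ (hU0 ω) (hU1 ω)
      rw [Set.mem_setOf_eq, hc1, hc2]
      exact lt_of_le_of_lt hgap.1 hgap.2
    have hQ1 : sQ' ≤ 1 := Stmt8Aux.surv_toReal_le_one hQd.1 x₀
    have hP0 : 0 ≤ sP := ENNReal.toReal_nonneg
    have hpos : 0 < P {ω | R P' ω < R Q ω} := by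
      calc (0:ENNReal) < ENNReal.ofReal ((1 - sP) - (1 - sQ')) := by
            rw [ENNReal.ofReal_pos]; linarith
        _ ≤ P {ω | 1 - sQ' < U ω ∧ U ω < 1 - sP} :=
            Stmt8Aux.unif_law_interval hatom hP (by linarith) (by linarith)
        _ ≤ P {ω | R P' ω < R Q ω} := measure_mono hsub
    have hae : P {ω | R P' ω ≤ R Q ω} = 1 := by
      have h1 : {ω | R P' ω ≤ R Q ω} = Set.univ := by
        ext ω
        simp only [Set.mem_setOf_eq, Set.mem_univ, iff_true]
        exact Stmt8Aux.cQ_fsd hPd.1 hQd.1 habP habQ hfsd (U ω)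
      rw [h1]
      exact measure_univ
    exact Stmt8CE.ce_strict hG hP hpref hM hSRM hC
      (hRbdd Q aQ bQ hQd.1 habQ) (hRbdd P' aP bP hPd.1 habP) hae hpos
  · -- continuity
    intro Qn Q hQdn hQd hsupp hw
    obtain ⟨a, b, hsuppn⟩ := hsupp
    obtain ⟨aQ, bQ, habQ⟩ := hQd.2
    set Bad : Set ℝ := {α | ¬ ContinuousAt (Stmt8Aux.cQ Q) α} ∪ {0, 1} with hBad_def
    have hBadcount : Bad.Countable :=
      ((Stmt8Aux.cQ_mono hQd.1 habQ).countable_not_continuousAt).union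
        ((Set.countable_singleton (0:ℝ)).insert 1 |>.mono (by
          intro x hx
          rcases hx with h | h
          · exact Set.mem_insert_iff.mpr (Or.inr h)
          · exact Set.mem_insert_iff.mpr (Or.inl h)))
    have hBadmeas : MeasurableSet Bad := hBadcount.measurableSet
    have hnull : P (U ⁻¹' Bad) = 0 := by
      apply le_antisymm _ (zero_le)
      have hsub2 : U ⁻¹' Bad ⊆ ⋃ t ∈ Bad, {ω | U ω = t} := by
        intro ω hω
        exact Set.mem_biUnion hω rfl
      calc P (U ⁻¹' Bad) ≤ P (⋃ t ∈ Bad, {ω | U ω = t}) := measure_mono hsub2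
        _ = 0 := (measure_biUnion_null_iff hBadcount).mpr
            (fun t _ => Stmt8Aux.unif_atom_zero hatom hP t)
    have hae : ∀ᵐ ω ∂P, U ω ∉ Bad := by
      rw [ae_iff]
      have h1 : {ω | ¬ U ω ∉ Bad} = U ⁻¹' Bad := by
        ext ω; simp
      rw [h1]
      exact hnull
    set f : ℕ → Ω → ℝ := fun n ω => if U ω ∈ Bad then R Q ω else R (Qn n) ω with hf_def
    have hMf : ∀ n ω, |f n ω| ≤ max (max |aQ| |bQ|) (max |a| |b|) := by
      intro n ω
      by_cases h : U ω ∈ Bad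
      · simp only [hf_def, if_pos h]
        exact le_trans (Stmt8Aux.cQ_abs_le hQd.1 habQ (U ω)) (le_max_left _ _)
      · simp only [hf_def, if_neg h]
        exact le_trans (Stmt8Aux.cQ_abs_le (hQdn n).1 (hsuppn n) (U ω)) (le_max_right _ _)
    have hfbdd : ∀ n, BddMeas G (f n) := by
      intro n
      constructor
      · exact Measurable.ite (hUmeas hBadmeas)
          ((Stmt8Aux.cQ_measurable hQd.1 habQ).comp hUmeas)
          ((Stmt8Aux.cQ_measurable (hQdn n).1 (hsuppn n)).comp hUmeas)
      · exact ⟨max (max |aQ| |bQ|) (max |a| |b|), fun ω => hMf n ω⟩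
    have hfconv : ∀ ω, Tendsto (fun n => f n ω) atTop (𝓝 (R Q ω)) := by
      intro ω
      by_cases h : U ω ∈ Bad
      · simp only [hf_def, if_pos h]
        exact tendsto_const_nhds
      · have hIoo : U ω ∈ Set.Ioo (0:ℝ) 1 := by
          constructor
          · rcases lt_or_eq_of_le (hU0 ω) with h0 | h0
            · exact h0
            · exact absurd (Or.inr (Or.inl h0.symm)) h
          · rcases lt_or_eq_of_le (hU1 ω) with h0 | h0
            · exact h0
            · exact absurd (Or.inr (Or.inr h0)) h
        have hcont : ContinuousAt (Stmt8Aux.cQ Q) (U ω) := by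
          by_contra hc
          exact h (Or.inl hc)
        have hsconv := Stmt8Aux.sQ_tendsto (fun n => (hQdn n).1) hQd.1 hsuppn habQ
          (fun x hx => weakconv_surv (fun n => (hQdn n).1) hQd.1 hw hx) hIoo hcont
        have heq : (fun n => f n ω) = fun n => Stmt8Aux.sQ (Qn n) (U ω) := by
          funext n
          simp only [hf_def, if_neg h]
          exact Stmt8Aux.cQ_eq_sQ (hU0 ω) (hU1 ω)
        rw [heq, show R Q ω = Stmt8Aux.sQ Q (U ω) from Stmt8Aux.cQ_eq_sQ (hU0 ω) (hU1 ω)]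
        exact hsconv
    have hlaweq : ∀ n, Stmt8CE.CE pref (f n) = Stmt8CE.CE pref (R (Qn n)) := by
      intro n
      apply hCEeq _ _ (hfbdd n) (hRbdd (Qn n) a b (hQdn n).1 (hsuppn n))
      intro x
      apply measure_congr
      filter_upwards [hae] with ω hω
      have heq2 : f n ω = R (Qn n) ω := by
        simp only [hf_def]
        rw [if_neg hω]
      show (x < f n ω) = (x < R (Qn n) ω)
      rw [heq2]
    have htend := Stmt8CE.ce_tendsto hG hP hpref hM hSRM hC hfbdd
      (hRbdd Q aQ bQ hQd.1 habQ)
      ⟨max (max |aQ| |bQ|) (max |a| |b|), hMf⟩ hfconv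
    exact Filter.Tendsto.congr (fun n => hlaweq n) htend
  · -- representation
    intro X Y hX hY
    rw [hγrep X hX, hγrep Y hY]
    constructor
    · intro h
      exact Stmt8CE.ce_le_of_pref hG hP hpref hM hSRM hC hX hY h
    · intro h
      exact Stmt8CE.pref_of_ce_le hG hP hpref hM hSRM hC hX hY h

end
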